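/- Fix a positive integer S and reals P > 0, c > 0. For each μ ∈ {0,…,S−1} let θ_μ > 0, set m_μ := μP/S + P/(2S), X_μ := θ_μ/(2·erf(P/(2√2·S·c))), h_μ(t) := (X_μ/(√(2π)·c))·exp(−(t−m_μ)²/(2c²)), and h_μ^ext(t) := Σ_{l∈ℤ} h_μ(t+lP). Then ∫₀^P |Σ_{μ=0}^{S−1} h_μ^ext(t) − Σ_{μ=0}^{S−1} 1_{[μP/S,(μ+1)P/S]}(t)·h_μ(t)| dt ≤ (max_μ θ_μ)·(S/2)·(1/erf(P/(2√2·S·c)) − 1), where erf(x) := (2/√π)·∫₀^x e^{−u²} du. -/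

import Mathlib

open MeasureTheory Real Set

/-- The error function `erf(x) = (2/√π)·∫₀^x e^{-u²} du`. -/
noncomputable def erf (x : ℝ) : ℝ := (2 / Real.sqrt Real.pi) * ∫ u in (0:ℝ)..x, Real.exp (-u ^ 2)

lemma erf_pos' {x : ℝ} (hx : 0 < x) : 0 < erf x := by
  refine mul_pos (div_pos two_pos (Real.sqrt_pos.mpr Real.pi_pos)) ?_
  exact intervalIntegral.intervalIntegral_pos_of_pos
    (Continuous.intervalIntegrable (by fun_prop) _ _) (fun t => Real.exp_pos _) hx

lemma erf_le_one' {x : ℝ} (hx : 0 ≤ x) : erf x ≤ 1 := by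
  have hint : Integrable fun u : ℝ => Real.exp (-u ^ 2) := by
    simpa using integrable_exp_neg_mul_sq (by norm_num : (0:ℝ) < 1)
  have hI : (∫ u in (0:ℝ)..x, Real.exp (-u ^ 2)) ≤ Real.sqrt Real.pi / 2 := by
    rw [intervalIntegral.integral_of_le hx]
    have h2 : (∫ u in Ioi (0:ℝ), Real.exp (-u ^ 2)) = Real.sqrt Real.pi / 2 := by
      have h := integral_gaussian_Ioi 1
      rw [div_one] at h
      simpa using h
    rw [← h2]
    refine setIntegral_mono_set hint.integrableOn
      (Filter.Eventually.of_forall fun t => (Real.exp_pos _).le)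
      (HasSubset.Subset.eventuallyLE Ioc_subset_Ioi_self)
  have hsp : (0:ℝ) < Real.sqrt Real.pi := Real.sqrt_pos.mpr Real.pi_pos
  calc erf x ≤ (2 / Real.sqrt Real.pi) * (Real.sqrt Real.pi / 2) :=
        mul_le_mul_of_nonneg_left hI (by positivity)
    _ = 1 := by field_simp

noncomputable def gpulse (K m c : ℝ) (t : ℝ) : ℝ := K * Real.exp (-(t - m) ^ 2 / (2 * c ^ 2))

lemma gpulse_eq (K m c : ℝ) :
    gpulse K m c = fun t => K * Real.exp (-((2 * c ^ 2)⁻¹) * (t - m) ^ 2) := by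
  funext t; unfold gpulse; congr 1; ring

lemma gpulse_nonneg {K : ℝ} (hK : 0 ≤ K) (m c t : ℝ) : 0 ≤ gpulse K m c t :=
  mul_nonneg hK (Real.exp_pos _).le

lemma gpulse_continuous (K m c : ℝ) : Continuous (gpulse K m c) := by
  unfold gpulse; fun_prop

lemma gpulse_integrable (K m : ℝ) {c : ℝ} (hc : 0 < c) : Integrable (gpulse K m c) := by
  rw [gpulse_eq K m c]
  have hb : 0 < (2 * c ^ 2)⁻¹ := by positivity
  exact ((integrable_exp_neg_mul_sq hb).comp_sub_right m).const_mul K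

lemma gpulse_integral (K m : ℝ) {c : ℝ} (hc : 0 < c) :
    ∫ t, gpulse K m c t = K * (Real.sqrt (2 * Real.pi) * c) := by
  rw [gpulse_eq K m c]
  have hb : 0 < (2 * c ^ 2)⁻¹ := by positivity
  rw [MeasureTheory.integral_const_mul]
  rw [integral_sub_right_eq_self (fun t => Real.exp (-((2 * c ^ 2)⁻¹) * t ^ 2)) m]
  rw [integral_gaussian]
  congr 1
  rw [show Real.pi / (2 * c ^ 2)⁻¹ = (2 * Real.pi) * c ^ 2 by field_simp]
  rw [Real.sqrt_mul (by positivity) (c ^ 2), Real.sqrt_sq hc.le]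

lemma aux_summable_exp {b P : ℝ} (hb : 0 < b) (hP : 0 < P) (x : ℝ) :
    Summable fun l : ℤ => Real.exp (-b * (x + l * P) ^ 2) := by
  have ht : 0 < b * P ^ 2 / Real.pi := by positivity
  refine (HurwitzKernelBounds.summable_f_int 0 (x / P) ht).congr fun n => ?_
  rw [HurwitzKernelBounds.f_int, pow_zero, one_mul]
  congr 1
  field_simp
  ring

lemma gpulse_summable {K P : ℝ} (m : ℝ) {c : ℝ} (hP : 0 < P) (hc : 0 < c) (t : ℝ) :
    Summable fun l : ℤ => gpulse K m c (t + l * P) := by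
  have hb : 0 < (2 * c ^ 2)⁻¹ := by positivity
  refine ((aux_summable_exp hb hP (t - m)).mul_left K).congr fun l => ?_
  rw [gpulse_eq K m c]
  congr 2
  ring

lemma aux_iUnion (P : ℝ) (hP : 0 < P) :
    (⋃ l : ℤ, Ioc ((l : ℝ) * P) (((l : ℝ) + 1) * P)) = univ := by
  ext x
  simp only [mem_iUnion, mem_Ioc, mem_univ, iff_true]
  refine ⟨⌈x / P⌉ - 1, ?_, ?_⟩
  · push_cast
    have hx : x / P * P = x := div_mul_cancel₀ x hP.ne'
    nlinarith [Int.ceil_lt_add_one (x / P)]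
  · push_cast
    have hx : x / P * P = x := div_mul_cancel₀ x hP.ne'
    nlinarith [Int.le_ceil (x / P)]

lemma aux_disjoint (P : ℝ) (hP : 0 < P) :
    Pairwise (Function.onFun Disjoint fun l : ℤ => Ioc ((l : ℝ) * P) (((l : ℝ) + 1) * P)) := by
  intro i j hij
  simp only [Function.onFun]
  rw [Set.Ioc_disjoint_Ioc]
  rcases hij.lt_or_gt with hl | hl
  · have h1 : (i : ℝ) + 1 ≤ (j : ℝ) := by exact_mod_cast hl
    exact min_le_of_left_le (le_trans (by nlinarith) (le_max_right _ _))
  · have h1 : (j : ℝ) + 1 ≤ (i : ℝ) := by exact_mod_cast hl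
    exact min_le_of_right_le (le_trans (by nlinarith) (le_max_left _ _))

lemma gpulse_periodized {K P m c : ℝ} (hK : 0 ≤ K) (hP : 0 < P) (hc : 0 < c) :
    IntegrableOn (fun t => ∑' l : ℤ, gpulse K m c (t + (l : ℝ) * P)) (Ioc 0 P) ∧
      ∫ t in Ioc (0:ℝ) P, (∑' l : ℤ, gpulse K m c (t + (l : ℝ) * P))
        = ∫ t, gpulse K m c t := by
  set g := gpulse K m c with hg
  have hgi : Integrable g := gpulse_integrable K m hc
  have hgc : Continuous g := gpulse_continuous K m c
  have hg0 : ∀ t, 0 ≤ g t := gpulse_nonneg hK m c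
  have hsum : ∀ t : ℝ, Summable fun l : ℤ => g (t + (l : ℝ) * P) :=
    fun t => gpulse_summable m hP hc t
  set s : ℤ → Set ℝ := fun l => Ioc ((l : ℝ) * P) (((l : ℝ) + 1) * P) with hs
  have hIl : ∀ l : ℤ, IntegrableOn (fun t => g (t + (l : ℝ) * P)) (Ioc 0 P) :=
    fun l => (hgi.comp_add_right _).integrableOn
  have hshift : ∀ l : ℤ, ∫ t in Ioc (0:ℝ) P, g (t + (l : ℝ) * P) = ∫ t in s l, g t := by
    intro l
    rw [← intervalIntegral.integral_of_le hP.le,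
      intervalIntegral.integral_comp_add_right g ((l : ℝ) * P), hs, zero_add]
    rw [intervalIntegral.integral_of_le (by nlinarith : (l : ℝ) * P ≤ P + (l : ℝ) * P)]
    congr 1
    ring
  have hHS : HasSum (fun l : ℤ => ∫ t in s l, g t) (∫ t, g t) := by
    have hU := aux_iUnion P hP
    have := hasSum_integral_iUnion (s := s) (f := g) (fun l => measurableSet_Ioc)
      (aux_disjoint P hP) (by rw [hs, hU]; exact hgi.integrableOn)
    rwa [hs, hU, setIntegral_univ] at this
  have hslnn : ∀ l : ℤ, 0 ≤ ∫ t in s l, g t :=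
    fun l => setIntegral_nonneg measurableSet_Ioc fun t _ => hg0 t
  have hlint : ∀ l : ℤ, ∫⁻ t in Ioc (0:ℝ) P, ‖g (t + (l : ℝ) * P)‖₊
      = ENNReal.ofReal (∫ t in s l, g t) := by
    intro l
    rw [← hshift l, ofReal_integral_eq_lintegral_ofReal (hIl l)
      (Filter.Eventually.of_forall fun t => hg0 _)]
    exact lintegral_congr fun t => by
      rw [← enorm_eq_nnnorm, ← ofReal_norm, Real.norm_of_nonneg (hg0 _)]
  have htsum_fin : (∑' l : ℤ, ∫⁻ t in Ioc (0:ℝ) P, ‖g (t + (l : ℝ) * P)‖₊) ≠ ⊤ := by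
    simp_rw [hlint]
    rw [← ENNReal.ofReal_tsum_of_nonneg hslnn hHS.summable]
    exact ENNReal.ofReal_ne_top
  have hmeas : ∀ l : ℤ, AEStronglyMeasurable (fun t => g (t + (l : ℝ) * P))
      (volume.restrict (Ioc (0:ℝ) P)) :=
    fun l => (hgc.comp (continuous_add_right _)).aestronglyMeasurable
  have hval : ∫ t in Ioc (0:ℝ) P, (∑' l : ℤ, g (t + (l : ℝ) * P)) = ∫ t, g t := by
    rw [MeasureTheory.integral_tsum hmeas htsum_fin]
    rw [tsum_congr hshift]
    exact hHS.tsum_eq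
  refine ⟨⟨?_, ?_⟩, hval⟩
  · have heq : (fun t => ∑' l : ℤ, g (t + (l : ℝ) * P))
        = fun t => (∑' l : ℤ, ENNReal.ofReal (g (t + (l : ℝ) * P))).toReal := by
      funext t
      rw [← ENNReal.ofReal_tsum_of_nonneg (fun l => hg0 _) (hsum t),
        ENNReal.toReal_ofReal (tsum_nonneg fun l => hg0 _)]
    rw [heq]
    exact (Measurable.ennreal_tsum fun l =>
      ((hgc.measurable.comp (measurable_add_const _)).ennreal_ofReal)).ennreal_toReal.aestronglyMeasurable
  · rw [hasFiniteIntegral_iff_norm]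
    have heq2 : ∀ t : ℝ, ENNReal.ofReal ‖∑' l : ℤ, g (t + (l : ℝ) * P)‖
        = ∑' l : ℤ, ENNReal.ofReal (g (t + (l : ℝ) * P)) := by
      intro t
      rw [Real.norm_of_nonneg (tsum_nonneg fun l => hg0 _),
        ENNReal.ofReal_tsum_of_nonneg (fun l => hg0 _) (hsum t)]
    rw [lintegral_congr heq2]
    rw [lintegral_tsum (f := fun (l : ℤ) (t : ℝ) => ENNReal.ofReal (g (t + (l : ℝ) * P)))
      fun l => ((hgc.measurable.comp (measurable_add_const _)).ennreal_ofReal).aemeasurable]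
    have h3 : ∀ l : ℤ, ∫⁻ t in Ioc (0:ℝ) P, ENNReal.ofReal (g (t + (l : ℝ) * P))
        = ∫⁻ t in Ioc (0:ℝ) P, ‖g (t + (l : ℝ) * P)‖₊ := by
      intro l
      exact lintegral_congr fun t => by
        rw [← enorm_eq_nnnorm, ← ofReal_norm, Real.norm_of_nonneg (hg0 _)]
    simp_rw [h3]
    exact lt_top_iff_ne_top.mpr htsum_fin

lemma gpulse_interval_erf (K m : ℝ) {c a : ℝ} (hc : 0 < c) :
    ∫ t in (m - a)..(m + a), gpulse K m c t
      = K * (Real.sqrt (2 * Real.pi) * c) * erf (a / (Real.sqrt 2 * c)) := by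
  have hs2 : (0:ℝ) < Real.sqrt 2 := by positivity
  have hsp : (0:ℝ) < Real.sqrt Real.pi := Real.sqrt_pos.mpr Real.pi_pos
  have hk : (Real.sqrt 2 * c)⁻¹ ≠ 0 := by positivity
  unfold gpulse
  rw [intervalIntegral.integral_const_mul]
  rw [intervalIntegral.integral_comp_sub_right (fun t => Real.exp (-t ^ 2 / (2 * c ^ 2))) m]
  have e1 : ∀ x : ℝ, Real.exp (-x ^ 2 / (2 * c ^ 2))
      = Real.exp (-(x * (Real.sqrt 2 * c)⁻¹) ^ 2) := by
    intro x
    congr 1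
    rw [mul_pow, mul_inv, mul_pow, inv_pow, inv_pow, Real.sq_sqrt (by norm_num : (0:ℝ) ≤ 2)]
    field_simp
  simp_rw [e1]
  rw [intervalIntegral.integral_comp_mul_right (fun u => Real.exp (-u ^ 2)) hk]
  rw [inv_inv]
  have hmm : m - a - m = -a := by ring
  have hpp : m + a - m = a := by ring
  rw [hmm, hpp]
  have hsplit : (∫ u in (-a * (Real.sqrt 2 * c)⁻¹)..(a * (Real.sqrt 2 * c)⁻¹), Real.exp (-u ^ 2))
      = 2 * ∫ u in (0:ℝ)..(a * (Real.sqrt 2 * c)⁻¹), Real.exp (-u ^ 2) := by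
    set y := a * (Real.sqrt 2 * c)⁻¹ with hy
    have hneg : -a * (Real.sqrt 2 * c)⁻¹ = -y := by rw [hy]; ring
    rw [hneg]
    have hint : ∀ u v : ℝ, IntervalIntegrable (fun u => Real.exp (-u ^ 2))
        MeasureTheory.volume u v := fun u v => Continuous.intervalIntegrable (by fun_prop) u v
    have hadj := intervalIntegral.integral_add_adjacent_intervals (a := -y) (b := 0) (c := y)
      (f := fun u => Real.exp (-u ^ 2)) (hint _ _) (hint _ _)
    rw [← hadj]
    have heven : (∫ u in (-y)..(0:ℝ), Real.exp (-u ^ 2)) = ∫ u in (0:ℝ)..y, Real.exp (-u ^ 2) := by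
      have h2 := intervalIntegral.integral_comp_neg (a := (0:ℝ)) (b := y)
        (f := fun u => Real.exp (-u ^ 2))
      simp only [neg_sq, neg_zero] at h2
      exact h2.symm
    rw [heven]; ring
  rw [hsplit]
  have hIerf : (∫ u in (0:ℝ)..(a * (Real.sqrt 2 * c)⁻¹), Real.exp (-u ^ 2))
      = Real.sqrt Real.pi / 2 * erf (a / (Real.sqrt 2 * c)) := by
    rw [erf, div_eq_mul_inv a]
    field_simp
  rw [hIerf, smul_eq_mul]
  rw [Real.sqrt_mul (by norm_num : (0:ℝ) ≤ 2) Real.pi]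
  ring

theorem area_error_bound (S : ℕ) (hS : 0 < S) (P c : ℝ) (hP : 0 < P) (hc : 0 < c)
    (θ : Fin S → ℝ) (hθ : ∀ μ, 0 < θ μ)
    (m X : Fin S → ℝ) (h : Fin S → ℝ → ℝ) (hext : Fin S → ℝ → ℝ)
    (hm : ∀ μ : Fin S, m μ = (μ : ℝ) * P / S + P / (2 * S))
    (hX : ∀ μ : Fin S, X μ = θ μ / (2 * erf (P / (2 * Real.sqrt 2 * S * c))))
    (hh : ∀ (μ : Fin S) (t : ℝ), h μ t =
      (X μ / (Real.sqrt (2 * Real.pi) * c)) * Real.exp (-(t - m μ) ^ 2 / (2 * c ^ 2)))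
    (hhext : ∀ (μ : Fin S) (t : ℝ), hext μ t = ∑' l : ℤ, h μ (t + (l : ℝ) * P)) :
    (∫ t in (0:ℝ)..P,
      |(∑ μ : Fin S, hext μ t) -
        ∑ μ : Fin S,
          Set.indicator (Set.Icc ((μ : ℝ) * P / S) (((μ : ℝ) + 1) * P / S)) (h μ) t|)
      ≤ (Finset.univ.sup' ⟨⟨0, hS⟩, Finset.mem_univ _⟩ θ) * (S / 2) *
          (1 / erf (P / (2 * Real.sqrt 2 * S * c)) - 1) := by
  have hS' : (0:ℝ) < (S : ℝ) := Nat.cast_pos.mpr hS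
  have hs2 : (0:ℝ) < Real.sqrt 2 := by positivity
  set y := P / (2 * Real.sqrt 2 * (S:ℝ) * c) with hy
  have hyp : 0 < y :=
    div_pos hP (mul_pos (mul_pos (mul_pos two_pos hs2) hS') hc)
  have hE0 : 0 < erf y := erf_pos' hyp
  have hE1 : erf y ≤ 1 := erf_le_one' hyp.le
  have hfac : 0 ≤ 1 / erf y - 1 := sub_nonneg.mpr (one_le_one_div hE0 hE1)
  have hsq2pi : (0:ℝ) < Real.sqrt (2 * Real.pi) * c := by positivity
  have hXpos : ∀ μ, 0 < X μ := fun μ => by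
    rw [hX]; exact div_pos (hθ μ) (mul_pos two_pos hE0)
  set K : Fin S → ℝ := fun μ => X μ / (Real.sqrt (2 * Real.pi) * c) with hK
  have hKpos : ∀ μ, 0 < K μ := fun μ => div_pos (hXpos μ) hsq2pi
  have hgh : ∀ μ, h μ = gpulse (K μ) (m μ) c := fun μ => funext fun t => by
    rw [hh]; rfl
  have hInt : ∀ μ, Integrable (h μ) := fun μ => by
    rw [hgh]; exact gpulse_integrable _ _ hc
  have hnn : ∀ μ t, 0 ≤ h μ t := fun μ t => by
    rw [hgh]; exact gpulse_nonneg (hKpos μ).le _ _ _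
  have hper : ∀ μ, IntegrableOn (hext μ) (Ioc 0 P) ∧
      ∫ t in Ioc (0:ℝ) P, hext μ t = X μ := by
    intro μ
    have hbase := gpulse_periodized (K := K μ) (P := P) (m := m μ) (c := c) (hKpos μ).le hP hc
    have heq : hext μ = fun t => ∑' l : ℤ, gpulse (K μ) (m μ) c (t + (l : ℝ) * P) :=
      funext fun t => by rw [hhext, hgh]
    rw [heq]
    refine ⟨hbase.1, ?_⟩
    rw [hbase.2, gpulse_integral (K μ) (m μ) hc, hK]
    exact div_mul_cancel₀ _ hsq2pi.ne'
  have hab : ∀ μ : Fin S, (μ : ℝ) * P / S = m μ - P / (2 * S)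
      ∧ ((μ : ℝ) + 1) * P / S = m μ + P / (2 * S) := by
    intro μ
    rw [hm]
    constructor
    · ring
    · field_simp
      ring
  have hd0 : (0:ℝ) ≤ P / (2 * S) := by positivity
  have hIndVal : ∀ μ : Fin S, ∫ t in Ioc (0:ℝ) P,
      Set.indicator (Set.Icc ((μ : ℝ) * P / S) (((μ : ℝ) + 1) * P / S)) (h μ) t
        = X μ * erf y := by
    intro μ
    obtain ⟨ha, hb⟩ := hab μ
    have hμ0 : (0:ℝ) ≤ (μ : ℝ) := by positivity
    have hab' : (μ : ℝ) * P / S ≤ ((μ : ℝ) + 1) * P / S := by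
      rw [ha, hb]; linarith
    have h0a : (0:ℝ) ≤ (μ : ℝ) * P / S :=
      div_nonneg (mul_nonneg hμ0 hP.le) hS'.le
    have hμS : ((μ : ℝ) + 1) ≤ (S : ℝ) := by exact_mod_cast μ.isLt
    have hbP : ((μ : ℝ) + 1) * P / S ≤ P := by
      rw [div_le_iff₀ hS']
      nlinarith
    rw [setIntegral_indicator measurableSet_Icc]
    have key : (∫ t in Ioc (0:ℝ) P ∩ Icc ((μ : ℝ) * P / S) (((μ : ℝ) + 1) * P / S), h μ t)
        = ∫ t in Icc ((μ : ℝ) * P / S) (((μ : ℝ) + 1) * P / S), h μ t := by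
      apply le_antisymm
      · exact setIntegral_mono_set (hInt μ).integrableOn
          (Filter.Eventually.of_forall fun t => hnn μ t)
          (HasSubset.Subset.eventuallyLE inter_subset_right)
      · rw [integral_Icc_eq_integral_Ioc]
        refine setIntegral_mono_set (hInt μ).integrableOn
          (Filter.Eventually.of_forall fun t => hnn μ t)
          (HasSubset.Subset.eventuallyLE ?_)
        intro x hx
        exact ⟨⟨lt_of_le_of_lt h0a hx.1, le_trans hx.2 hbP⟩, ⟨hx.1.le, hx.2⟩⟩
    rw [key, integral_Icc_eq_integral_Ioc, ← intervalIntegral.integral_of_le hab']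
    rw [ha, hb, hgh μ, gpulse_interval_erf (K μ) (m μ) hc]
    have harg : (P / (2 * (S:ℝ))) / (Real.sqrt 2 * c) = y := by
      rw [hy, div_div]
      congr 1
      ring
    rw [harg, hK]
    rw [div_mul_cancel₀ _ hsq2pi.ne']
  have hIndInt : ∀ μ : Fin S, IntegrableOn
      (fun t => Set.indicator (Set.Icc ((μ : ℝ) * P / S) (((μ : ℝ) + 1) * P / S)) (h μ) t)
      (Ioc 0 P) := fun μ => ((hInt μ).indicator measurableSet_Icc).integrableOn
  have hsumh : ∀ μ t, Summable fun l : ℤ => h μ (t + (l : ℝ) * P) := fun μ t => by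
    rw [hgh]; exact gpulse_summable (m μ) hP hc t
  have hpt : ∀ t : ℝ,
      (∑ μ : Fin S, Set.indicator (Set.Icc ((μ : ℝ) * P / S) (((μ : ℝ) + 1) * P / S)) (h μ) t)
        ≤ ∑ μ : Fin S, hext μ t := by
    intro t
    refine Finset.sum_le_sum fun μ _ => ?_
    have h1 : Set.indicator (Set.Icc ((μ : ℝ) * P / S) (((μ : ℝ) + 1) * P / S)) (h μ) t
        ≤ h μ t := Set.indicator_le_self' (fun x _ => hnn μ x) t
    have h2 : h μ t ≤ ∑' l : ℤ, h μ (t + (l : ℝ) * P) := by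
      have := Summable.le_tsum (hsumh μ t) 0 (fun l _ => hnn μ _)
      simpa using this
    rw [hhext]
    exact le_trans h1 h2
  have hAint : IntegrableOn (fun t => ∑ μ : Fin S, hext μ t) (Ioc 0 P) :=
    integrable_finset_sum _ (fun μ _ => (hper μ).1)
  have hBint : IntegrableOn (fun t => ∑ μ : Fin S,
      Set.indicator (Set.Icc ((μ : ℝ) * P / S) (((μ : ℝ) + 1) * P / S)) (h μ) t) (Ioc 0 P) :=
    integrable_finset_sum _ (fun μ _ => hIndInt μ)
  set Θ := Finset.univ.sup' ⟨⟨0, hS⟩, Finset.mem_univ _⟩ θ with hΘ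
  rw [intervalIntegral.integral_of_le hP.le]
  calc (∫ t in Ioc (0:ℝ) P,
      |(∑ μ : Fin S, hext μ t) -
        ∑ μ : Fin S, Set.indicator (Set.Icc ((μ : ℝ) * P / S) (((μ : ℝ) + 1) * P / S)) (h μ) t|)
      = ∫ t in Ioc (0:ℝ) P, ((∑ μ : Fin S, hext μ t) -
          ∑ μ : Fin S, Set.indicator (Set.Icc ((μ : ℝ) * P / S) (((μ : ℝ) + 1) * P / S)) (h μ) t) :=
        integral_congr_ae (Filter.Eventually.of_forall fun t =>
          abs_of_nonneg (sub_nonneg.mpr (hpt t)))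
    _ = (∫ t in Ioc (0:ℝ) P, ∑ μ : Fin S, hext μ t) -
          ∫ t in Ioc (0:ℝ) P, ∑ μ : Fin S,
            Set.indicator (Set.Icc ((μ : ℝ) * P / S) (((μ : ℝ) + 1) * P / S)) (h μ) t :=
        integral_sub hAint hBint
    _ = (∑ μ : Fin S, X μ) - ∑ μ : Fin S, X μ * erf y := by
        rw [integral_finset_sum _ (fun μ _ => (hper μ).1),
          integral_finset_sum _ (fun μ _ => hIndInt μ)]
        rw [Finset.sum_congr rfl fun μ _ => (hper μ).2,
          Finset.sum_congr rfl fun μ _ => hIndVal μ]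
    _ = ∑ μ : Fin S, (θ μ / 2 * (1 / erf y - 1)) := by
        rw [← Finset.sum_sub_distrib]
        refine Finset.sum_congr rfl fun μ _ => ?_
        rw [hX μ]
        field_simp
    _ ≤ ∑ _μ : Fin S, (Θ / 2 * (1 / erf y - 1)) := by
        refine Finset.sum_le_sum fun μ _ => ?_
        refine mul_le_mul_of_nonneg_right ?_ hfac
        have := Finset.le_sup' θ (Finset.mem_univ μ)
        linarith
    _ = Θ * ((S : ℝ) / 2) * (1 / erf y - 1) := by
        rw [Finset.sum_const, Finset.card_univ, Fintype.card_fin, nsmul_eq_mul]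
        ring
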